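/- arXiv:1904.07988 — 3 statements merged into one kernel-verified Lean document; each statement's English description precedes it below -/
import Mathlib

section
/- For positive constants a, b and all vectors x, x₀ in R², the function g(x|x₀) = −a‖x‖²/b² + 2a(1/b² − 1/(a‖x₀‖² + b)²)⟨x, x₀⟩ + 1/(a‖x₀‖² + b) + 2a‖x₀‖²/(a‖x₀‖² + b)² − a‖x₀‖²/b² satisfies g(x|x₀) ≤ 1/(a‖x‖² + b). -/
theorem surrogate_lower_bound (a b : ℝ) (ha : 0 < a) (hb : 0 < b)
    (x x₀ : EuclideanSpace ℝ (Fin 2)) :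
    - a * ‖x‖ ^ 2 / b ^ 2
      + 2 * a * (1 / b ^ 2 - 1 / (a * ‖x₀‖ ^ 2 + b) ^ 2) * inner ℝ x x₀
      + 1 / (a * ‖x₀‖ ^ 2 + b)
      + 2 * a * ‖x₀‖ ^ 2 / (a * ‖x₀‖ ^ 2 + b) ^ 2
      - a * ‖x₀‖ ^ 2 / b ^ 2
      ≤ 1 / (a * ‖x‖ ^ 2 + b) := by
  set u : ℝ := ‖x‖ with hu
  set v : ℝ := ‖x₀‖ with hv
  have hu0 : 0 ≤ u := norm_nonneg _
  have hv0 : 0 ≤ v := norm_nonneg _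
  set c : ℝ := a * v ^ 2 + b with hc
  set d : ℝ := a * u ^ 2 + b with hd
  have hcpos : 0 < c := by positivity
  have hdpos : 0 < d := by positivity
  have hip : (inner ℝ x x₀ : ℝ) ≤ u * v := real_inner_le_norm x x₀
  have hp : (inner ℝ x x₀ : ℝ) ≤ (u ^ 2 + v ^ 2) / 2 := by nlinarith [sq_nonneg (u - v)]
  have hbc : b ≤ c := by nlinarith
  have hcoef : 0 ≤ 1 / b ^ 2 - 1 / c ^ 2 := by
    have : 1 / c ^ 2 ≤ 1 / b ^ 2 := by
      apply one_div_le_one_div_of_le (by positivity)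
      nlinarith
    linarith
  have step1 : 2 * a * (1 / b ^ 2 - 1 / c ^ 2) * inner ℝ x x₀
      ≤ 2 * a * (1 / b ^ 2 - 1 / c ^ 2) * ((u ^ 2 + v ^ 2) / 2) := by
    apply mul_le_mul_of_nonneg_left hp
    positivity
  have step2 : - a * u ^ 2 / b ^ 2
      + 2 * a * (1 / b ^ 2 - 1 / c ^ 2) * ((u ^ 2 + v ^ 2) / 2)
      + 1 / c + 2 * a * v ^ 2 / c ^ 2 - a * v ^ 2 / b ^ 2 ≤ 1 / d := by
    rw [← sub_nonneg]
    have key : 1 / d - (- a * u ^ 2 / b ^ 2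
        + 2 * a * (1 / b ^ 2 - 1 / c ^ 2) * ((u ^ 2 + v ^ 2) / 2)
        + 1 / c + 2 * a * v ^ 2 / c ^ 2 - a * v ^ 2 / b ^ 2)
        = (c - d) ^ 2 / (c ^ 2 * d) := by
      rw [hc, hd]
      field_simp
      ring
    rw [key]
    positivity
  linarith
end

section
/- For positive constants a, b and any x in R², the matrix ∇²f(x) − ∇²g(x) is positive semidefinite, where ∇²f(x) = (−2a/(a‖x‖² + b)²)·I + (8a²/(a‖x‖² + b)³)·x xᵀ and ∇²g(x) = (−2a/b²)·I. -/
theorem hessian_difference_psd (a b : ℝ) (ha : 0 < a) (hb : 0 < b)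
    (x : EuclideanSpace ℝ (Fin 2)) :
    (((-2 * a / (a * ‖x‖ ^ 2 + b) ^ 2) • (1 : Matrix (Fin 2) (Fin 2) ℝ)
        + (8 * a ^ 2 / (a * ‖x‖ ^ 2 + b) ^ 3) • Matrix.of (fun i j => x i * x j))
      - (-2 * a / b ^ 2) • (1 : Matrix (Fin 2) (Fin 2) ℝ)).PosSemidef := by
  have hq : (0:ℝ) ≤ ‖x‖ ^ 2 := sq_nonneg _
  have hs : 0 < a * ‖x‖ ^ 2 + b := by positivity
  have hbs : b ≤ a * ‖x‖ ^ 2 + b := le_add_of_nonneg_left (mul_nonneg ha.le hq)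
  have hα : 0 ≤ -2 * a / (a * ‖x‖ ^ 2 + b) ^ 2 - -2 * a / b ^ 2 := by
    have h2 : b ^ 2 ≤ (a * ‖x‖ ^ 2 + b) ^ 2 := pow_le_pow_left₀ hb.le hbs 2
    have := div_le_div_of_nonneg_left (by linarith : (0:ℝ) ≤ 2 * a) (by positivity : (0:ℝ) < b ^ 2) h2
    have h3 : 2 * a / (a * ‖x‖ ^ 2 + b) ^ 2 ≤ 2 * a / b ^ 2 := by
      apply div_le_div_of_nonneg_left (by linarith) (by positivity) h2
    have e1 : -2 * a / (a * ‖x‖ ^ 2 + b) ^ 2 = -(2 * a / (a * ‖x‖ ^ 2 + b) ^ 2) := by ring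
    have e2 : -2 * a / b ^ 2 = -(2 * a / b ^ 2) := by ring
    rw [e1, e2]; linarith
  have hβ : 0 ≤ 8 * a ^ 2 / (a * ‖x‖ ^ 2 + b) ^ 3 := by positivity
  rw [Matrix.posSemidef_iff_dotProduct_mulVec]
  constructor
  · ext i j
    by_cases h : i = j
    · subst h
      simp [Matrix.conjTranspose_apply, Matrix.sub_apply, Matrix.add_apply, Matrix.smul_apply,
        Matrix.one_apply]
    · simp [Matrix.conjTranspose_apply, Matrix.sub_apply, Matrix.add_apply, Matrix.smul_apply,
        Matrix.one_apply, h, Ne.symm h, mul_comm]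
  · intro v
    simp only [dotProduct, Matrix.mulVec, Matrix.sub_apply, Matrix.add_apply,
      Matrix.smul_apply, Matrix.one_apply, Matrix.of_apply, Fin.sum_univ_two, Pi.star_apply,
      star_trivial, smul_eq_mul, dotProduct]
    have h0 := mul_nonneg hα (sq_nonneg (v 0))
    have h1 := mul_nonneg hα (sq_nonneg (v 1))
    have h2 := mul_nonneg hβ (sq_nonneg (x 0 * v 0 + x 1 * v 1))
    norm_num
    ring_nf
    ring_nf at h0 h1 h2
    linarith [h0, h1, h2]
end

section
/- Let q, w, q^r ∈ R² and H > 0. Define D = 2(1/H⁴ − 1/(‖q^r − w‖² + H²)²) and F = 1/(‖q^r − w‖² + H²) + 2‖q^r − w‖²/(‖q^r − w‖² + H²)² − ‖q^r − w‖²/H⁴. Then −‖q − w‖²/H⁴ + D·⟨q − w, q^r − w⟩ + F ≤ 1/(H² + ‖q − w‖²). -/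
lemma surrogate_real (x y t s H : ℝ) (hH : 0 < H) (hx : 0 ≤ x) (hy : 0 ≤ y)
    (hs : 0 ≤ s) (hst : s = x - 2 * t + y) :
    - x / H ^ 4 + (2 * (1 / H ^ 4 - 1 / (y + H ^ 2) ^ 2)) * t
      + (1 / (y + H ^ 2) + 2 * y / (y + H ^ 2) ^ 2 - y / H ^ 4)
      ≤ 1 / (H ^ 2 + x) := by
  have hA : 0 < y + H ^ 2 := by positivity
  have hB : 0 < H ^ 2 + x := by positivity
  have hH4 : (0:ℝ) < H ^ 4 := by positivity
  have h1 : H ^ 4 ≤ (y + H ^ 2) ^ 2 := by nlinarith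
  have key : (- x / H ^ 4 + (2 * (1 / H ^ 4 - 1 / (y + H ^ 2) ^ 2)) * t
      + (1 / (y + H ^ 2) + 2 * y / (y + H ^ 2) ^ 2 - y / H ^ 4)) * (H ^ 4 * (y + H ^ 2) ^ 2 * (H ^ 2 + x))
      ≤ 1 / (H ^ 2 + x) * (H ^ 4 * (y + H ^ 2) ^ 2 * (H ^ 2 + x)) := by
    have e1 : (- x / H ^ 4 + (2 * (1 / H ^ 4 - 1 / (y + H ^ 2) ^ 2)) * t
      + (1 / (y + H ^ 2) + 2 * y / (y + H ^ 2) ^ 2 - y / H ^ 4)) * (H ^ 4 * (y + H ^ 2) ^ 2 * (H ^ 2 + x))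
      = (- x * (y + H ^ 2) ^ 2 + 2 * ((y+H^2)^2 - H^4) * t + H^4*(y+H^2) + 2*y*H^4 - y*(y+H^2)^2) * (H ^ 2 + x) := by
      field_simp
      ring
    have e2 : 1 / (H ^ 2 + x) * (H ^ 4 * (y + H ^ 2) ^ 2 * (H ^ 2 + x)) = H ^ 4 * (y + H ^ 2) ^ 2 := by
      field_simp
    rw [e1, e2]
    have e3 : (- x * (y + H ^ 2) ^ 2 + 2 * ((y+H^2)^2 - H^4) * t + H^4*(y+H^2) + 2*y*H^4 - y*(y+H^2)^2) * (H ^ 2 + x)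
        = H ^ 4 * (y + H ^ 2) ^ 2 - H ^ 4 * (x - y) ^ 2 - ((y + H ^ 2) ^ 2 - H ^ 4) * (s * (H ^ 2 + x)) := by
      rw [show t = (x + y - s) / 2 by linarith]; ring
    rw [e3]
    nlinarith [mul_nonneg (sq_nonneg (x-y)) hH4.le, mul_nonneg (sub_nonneg.2 h1) (mul_nonneg hs hB.le)]
  have hpos : 0 < H ^ 4 * (y + H ^ 2) ^ 2 * (H ^ 2 + x) := by positivity
  exact le_of_mul_le_mul_right key hpos

theorem channel_gain_surrogate_instance (q w qr : EuclideanSpace ℝ (Fin 2))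
    (H : ℝ) (hH : 0 < H) :
    - ‖q - w‖ ^ 2 / H ^ 4
      + (2 * (1 / H ^ 4 - 1 / (‖qr - w‖ ^ 2 + H ^ 2) ^ 2))
          * inner ℝ (q - w) (qr - w)
      + (1 / (‖qr - w‖ ^ 2 + H ^ 2)
          + 2 * ‖qr - w‖ ^ 2 / (‖qr - w‖ ^ 2 + H ^ 2) ^ 2
          - ‖qr - w‖ ^ 2 / H ^ 4)
      ≤ 1 / (H ^ 2 + ‖q - w‖ ^ 2) := by
  have hst : ‖(q - w) - (qr - w)‖ ^ 2
      = ‖q - w‖ ^ 2 - 2 * inner ℝ (q - w) (qr - w) + ‖qr - w‖ ^ 2 :=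
    norm_sub_sq_real (q - w) (qr - w)
  exact surrogate_real (‖q - w‖ ^ 2) (‖qr - w‖ ^ 2) (inner ℝ (q - w) (qr - w))
    (‖(q - w) - (qr - w)‖ ^ 2) H hH (by positivity) (by positivity) (by positivity) hst
end
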